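/- (Gallucci's theorem.) Let K be a field (commutative). Let a, b, c be pairwise skew lines of ℙ³(K) and let e, f, g be pairwise skew lines of ℙ³(K) such that each of e, f, g meets each of a, b, c (all nine intersections are nonzero subspaces). Then every line h that meets all of a, b, c also meets every line d that meets all of e, f, g; that is, for any common transversal h of {a,b,c} and any common transversal d of {e,f,g}, we have h ∩ d ≠ 0. -/
import Mathlib
open Submodule Module

section helpers
variable {K V : Type*} [Field K] [AddCommGroup V] [Module K V]

lemma indep_pair' {a b : Submodule K V} (hab : a ⊓ b = ⊥) {x y : V}
    (hx : x ∈ a) (hy : y ∈ b) (hx0 : x ≠ 0) (hy0 : y ≠ 0) :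
    ∀ s t : K, s • x + t • y = 0 → s = 0 ∧ t = 0 := by
  intro s t hst
  have h2 : s • x ∈ a ⊓ b := by
    refine ⟨a.smul_mem _ hx, ?_⟩
    have hq : s • x = -(t • y) := eq_neg_of_add_eq_zero_left hst
    rw [hq]; exact b.neg_mem (b.smul_mem _ hy)
  rw [hab, Submodule.mem_bot] at h2
  have hs : s = 0 := by
    rcases smul_eq_zero.1 h2 with h | h
    · exact h
    · exact absurd h hx0
  refine ⟨hs, ?_⟩
  subst hs
  rw [zero_smul, zero_add] at hst
  rcases smul_eq_zero.1 hst with h | h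
  · exact h
  · exact absurd h hy0

lemma four_term {a b : Submodule K V} (hab : a ⊓ b = ⊥) {P Q P' Q' : V}
    (hP : P ∈ a) (hQ : Q ∈ a) (hP' : P' ∈ b) (hQ' : Q' ∈ b)
    (h1 : ∀ s t : K, s • P + t • Q = 0 → s = 0 ∧ t = 0)
    (h2 : ∀ s t : K, s • P' + t • Q' = 0 → s = 0 ∧ t = 0)
    {c₁ c₂ c₃ c₄ : K} (h : c₁ • P + c₂ • Q + c₃ • P' + c₄ • Q' = 0) :
    c₁ = 0 ∧ c₂ = 0 ∧ c₃ = 0 ∧ c₄ = 0 := by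
  have hm : c₁ • P + c₂ • Q ∈ a ⊓ b := by
    refine ⟨add_mem (a.smul_mem _ hP) (a.smul_mem _ hQ), ?_⟩
    have hq : c₁ • P + c₂ • Q = -(c₃ • P' + c₄ • Q') := by
      linear_combination (norm := module) h
    rw [hq]
    exact b.neg_mem (add_mem (b.smul_mem _ hP') (b.smul_mem _ hQ'))
  rw [hab, Submodule.mem_bot] at hm
  obtain ⟨e1, e2⟩ := h1 _ _ hm
  have hm2 : c₃ • P' + c₄ • Q' = 0 := by
    rw [e1, e2] at h; linear_combination (norm := module) h
  obtain ⟨e3, e4⟩ := h2 _ _ hm2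
  exact ⟨e1, e2, e3, e4⟩

lemma spanrank' {x y : V} (h : ∀ s t : K, s • x + t • y = 0 → s = 0 ∧ t = 0) :
    finrank K (span K ({x, y} : Set V)) = 2 := by
  have hli : LinearIndependent K ![x, y] := LinearIndependent.pair_iff.2 h
  have hr := finrank_span_eq_card hli
  have hs : Set.range ![x, y] = {x, y} := by
    ext z
    simp [Fin.exists_fin_two, or_comm]
  rw [hs] at hr
  simpa using hr

lemma eq_span_pair [FiniteDimensional K V] {a : Submodule K V} (ha : finrank K a = 2)
    {x y : V} (hx : x ∈ a) (hy : y ∈ a)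
    (h : ∀ s t : K, s • x + t • y = 0 → s = 0 ∧ t = 0) :
    a = span K {x, y} := by
  have hle : span K ({x, y} : Set V) ≤ a := by
    rw [span_le]
    rintro z hz
    rcases hz with rfl | rfl
    · exact hx
    · exact hy
  exact (eq_of_le_of_finrank_le hle (by rw [ha, spanrank' h])).symm

lemma span_smul_pair {s t : K} (hs : s ≠ 0) (ht : t ≠ 0) (x y : V) :
    span K ({s • x, t • y} : Set V) = span K {x, y} := by
  apply le_antisymm
  · rw [span_le]
    rintro z (rfl | rfl)
    · exact smul_mem _ _ (subset_span (by simp))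
    · exact smul_mem _ _ (subset_span (by simp))
  · rw [span_le]
    rintro z (rfl | rfl)
    · exact mem_span_pair.2 ⟨s⁻¹, 0, by simp [smul_smul, inv_mul_cancel₀ hs]⟩
    · exact mem_span_pair.2 ⟨0, t⁻¹, by simp [smul_smul, inv_mul_cancel₀ ht]⟩

lemma lemA [FiniteDimensional K V] {a b t : Submodule K V} (ht : finrank K t = 2)
    (hab : a ⊓ b = ⊥) (h1 : t ⊓ a ≠ ⊥) (h2 : t ⊓ b ≠ ⊥) :
    ∃ x y : V, x ∈ a ∧ y ∈ b ∧ x ≠ 0 ∧ y ≠ 0 ∧ t = span K {x, y} := by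
  obtain ⟨x, hx, hx0⟩ := (Submodule.ne_bot_iff _).1 h1
  obtain ⟨y, hy, hy0⟩ := (Submodule.ne_bot_iff _).1 h2
  exact ⟨x, y, hx.2, hy.2, hx0, hy0,
    eq_span_pair ht hx.1 hy.1 (indep_pair' hab hx.2 hy.2 hx0 hy0)⟩

end helpers


/-- Gallucci's theorem in `ℙ³(K)` over a (commutative) field `K`: if the three pairwise skew
lines `e`, `f`, `g` each meet the three pairwise skew lines `a`, `b`, `c`, then every
transversal `h` of `a`, `b`, `c` meets every transversal `d` of `e`, `f`, `g`. -/
theorem gallucci {K : Type*} [Field K]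
    (a b c e f g h d : Submodule K (Fin 4 → K))
    (ha : Module.finrank K a = 2) (hb : Module.finrank K b = 2)
    (hc : Module.finrank K c = 2) (he : Module.finrank K e = 2)
    (hf : Module.finrank K f = 2) (hg : Module.finrank K g = 2)
    (hh : Module.finrank K h = 2) (hd : Module.finrank K d = 2)
    (hab : a ⊓ b = ⊥) (hac : a ⊓ c = ⊥) (hbc : b ⊓ c = ⊥)
    (hef : e ⊓ f = ⊥) (heg : e ⊓ g = ⊥) (hfg : f ⊓ g = ⊥)
    (hea : e ⊓ a ≠ ⊥) (heb : e ⊓ b ≠ ⊥) (hec : e ⊓ c ≠ ⊥)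
    (hfa : f ⊓ a ≠ ⊥) (hfb : f ⊓ b ≠ ⊥) (hfc : f ⊓ c ≠ ⊥)
    (hga : g ⊓ a ≠ ⊥) (hgb : g ⊓ b ≠ ⊥) (hgc : g ⊓ c ≠ ⊥)
    (hha : h ⊓ a ≠ ⊥) (hhb : h ⊓ b ≠ ⊥) (hhc : h ⊓ c ≠ ⊥)
    (hde : d ⊓ e ≠ ⊥) (hdf : d ⊓ f ≠ ⊥) (hdg : d ⊓ g ≠ ⊥) :
    h ⊓ d ≠ ⊥ := by
  classical
  -- decompose the transversals e, f, g, h of (a,b), and d of (e,f)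
  obtain ⟨p, p', hpa, hp'b, hp0, hp'0, heS⟩ := lemA he hab hea heb
  obtain ⟨q, q', hqa, hq'b, hq0, hq'0, hfS⟩ := lemA hf hab hfa hfb
  obtain ⟨r, r', hra, hr'b, hr0, hr'0, hgS⟩ := lemA hg hab hga hgb
  obtain ⟨x, y, hxa, hyb, hx0, hy0, hhS⟩ := lemA hh hab hha hhb
  obtain ⟨u, v, hue, hvf, hu0, hv0, hdS⟩ := lemA hd hef hde hdf
  -- basic memberships
  have hpe : p ∈ e := by rw [heS]; exact subset_span (by simp)
  have hp'e : p' ∈ e := by rw [heS]; exact subset_span (by simp)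
  have hqf : q ∈ f := by rw [hfS]; exact subset_span (by simp)
  have hq'f : q' ∈ f := by rw [hfS]; exact subset_span (by simp)
  have hrg : r ∈ g := by rw [hgS]; exact subset_span (by simp)
  have hr'g : r' ∈ g := by rw [hgS]; exact subset_span (by simp)
  have hxh : x ∈ h := by rw [hhS]; exact subset_span (by simp)
  have hyh : y ∈ h := by rw [hhS]; exact subset_span (by simp)
  have hud : u ∈ d := by rw [hdS]; exact subset_span (by simp)
  have hvd : v ∈ d := by rw [hdS]; exact subset_span (by simp)
  -- points of c on e, f, g
  obtain ⟨z₁, hz₁, hz₁0⟩ := (Submodule.ne_bot_iff _).1 hec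
  obtain ⟨z₂, hz₂, hz₂0⟩ := (Submodule.ne_bot_iff _).1 hfc
  obtain ⟨z₃, hz₃, hz₃0⟩ := (Submodule.ne_bot_iff _).1 hgc
  obtain ⟨a₁, b₁, hz₁eq⟩ := mem_span_pair.1 (heS ▸ hz₁.1)
  obtain ⟨a₂, b₂, hz₂eq⟩ := mem_span_pair.1 (hfS ▸ hz₂.1)
  obtain ⟨a₃, b₃, hz₃eq⟩ := mem_span_pair.1 (hgS ▸ hz₃.1)
  have ha₁ : a₁ ≠ 0 := by
    rintro rfl
    have hm : z₁ ∈ b ⊓ c := ⟨by rw [← hz₁eq]; simpa using b.smul_mem b₁ hp'b, hz₁.2⟩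
    rw [hbc, Submodule.mem_bot] at hm
    exact hz₁0 hm
  have hb₁ : b₁ ≠ 0 := by
    rintro rfl
    have hm : z₁ ∈ a ⊓ c := ⟨by rw [← hz₁eq]; simpa using a.smul_mem a₁ hpa, hz₁.2⟩
    rw [hac, Submodule.mem_bot] at hm
    exact hz₁0 hm
  have ha₂ : a₂ ≠ 0 := by
    rintro rfl
    have hm : z₂ ∈ b ⊓ c := ⟨by rw [← hz₂eq]; simpa using b.smul_mem b₂ hq'b, hz₂.2⟩
    rw [hbc, Submodule.mem_bot] at hm
    exact hz₂0 hm
  have hb₂ : b₂ ≠ 0 := by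
    rintro rfl
    have hm : z₂ ∈ a ⊓ c := ⟨by rw [← hz₂eq]; simpa using a.smul_mem a₂ hqa, hz₂.2⟩
    rw [hac, Submodule.mem_bot] at hm
    exact hz₂0 hm
  have ha₃ : a₃ ≠ 0 := by
    rintro rfl
    have hm : z₃ ∈ b ⊓ c := ⟨by rw [← hz₃eq]; simpa using b.smul_mem b₃ hr'b, hz₃.2⟩
    rw [hbc, Submodule.mem_bot] at hm
    exact hz₃0 hm
  have hb₃ : b₃ ≠ 0 := by
    rintro rfl
    have hm : z₃ ∈ a ⊓ c := ⟨by rw [← hz₃eq]; simpa using a.smul_mem a₃ hra, hz₃.2⟩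
    rw [hac, Submodule.mem_bot] at hm
    exact hz₃0 hm
  -- rescaled points (opaque, so that `module`/`match_scalars` treat them as atoms)
  obtain ⟨P, hPdef⟩ : ∃ w', w' = a₁ • p := ⟨_, rfl⟩
  obtain ⟨P', hP'def⟩ : ∃ w', w' = b₁ • p' := ⟨_, rfl⟩
  obtain ⟨Q, hQdef⟩ : ∃ w', w' = a₂ • q := ⟨_, rfl⟩
  obtain ⟨Q', hQ'def⟩ : ∃ w', w' = b₂ • q' := ⟨_, rfl⟩
  obtain ⟨R, hRdef⟩ : ∃ w', w' = a₃ • r := ⟨_, rfl⟩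
  obtain ⟨R', hR'def⟩ : ∃ w', w' = b₃ • r' := ⟨_, rfl⟩
  rw [← hPdef, ← hP'def] at hz₁eq
  rw [← hQdef, ← hQ'def] at hz₂eq
  rw [← hRdef, ← hR'def] at hz₃eq
  have hPa : P ∈ a := by rw [hPdef]; exact a.smul_mem _ hpa
  have hQa : Q ∈ a := by rw [hQdef]; exact a.smul_mem _ hqa
  have hRa : R ∈ a := by rw [hRdef]; exact a.smul_mem _ hra
  have hP'b : P' ∈ b := by rw [hP'def]; exact b.smul_mem _ hp'b
  have hQ'b : Q' ∈ b := by rw [hQ'def]; exact b.smul_mem _ hq'b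
  have hR'b : R' ∈ b := by rw [hR'def]; exact b.smul_mem _ hr'b
  have hP0 : P ≠ 0 := by rw [hPdef]; exact smul_ne_zero ha₁ hp0
  have hQ0 : Q ≠ 0 := by rw [hQdef]; exact smul_ne_zero ha₂ hq0
  have hR0 : R ≠ 0 := by rw [hRdef]; exact smul_ne_zero ha₃ hr0
  have hP'0 : P' ≠ 0 := by rw [hP'def]; exact smul_ne_zero hb₁ hp'0
  have hQ'0 : Q' ≠ 0 := by rw [hQ'def]; exact smul_ne_zero hb₂ hq'0
  have hR'0 : R' ≠ 0 := by rw [hR'def]; exact smul_ne_zero hb₃ hr'0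
  have hPe : P ∈ e := by rw [hPdef]; exact e.smul_mem _ hpe
  have hP'e : P' ∈ e := by rw [hP'def]; exact e.smul_mem _ hp'e
  have hQf : Q ∈ f := by rw [hQdef]; exact f.smul_mem _ hqf
  have hQ'f : Q' ∈ f := by rw [hQ'def]; exact f.smul_mem _ hq'f
  have hRg : R ∈ g := by rw [hRdef]; exact g.smul_mem _ hrg
  have hR'g : R' ∈ g := by rw [hR'def]; exact g.smul_mem _ hr'g
  have heS2 : e = Submodule.span K {P, P'} := by
    rw [hPdef, hP'def]; exact heS.trans (span_smul_pair ha₁ hb₁ p p').symm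
  have hfS2 : f = Submodule.span K {Q, Q'} := by
    rw [hQdef, hQ'def]; exact hfS.trans (span_smul_pair ha₂ hb₂ q q').symm
  have hgS2 : g = Submodule.span K {R, R'} := by
    rw [hRdef, hR'def]; exact hgS.trans (span_smul_pair ha₃ hb₃ r r').symm
  have hPP'c : P + P' ∈ c := by rw [hz₁eq]; exact hz₁.2
  have hQQ'c : Q + Q' ∈ c := by rw [hz₂eq]; exact hz₂.2
  have hRR'c : R + R' ∈ c := by rw [hz₃eq]; exact hz₃.2
  -- pair independences
  have iPQ := indep_pair' hef hPe hQf hP0 hQ0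
  have iP'Q' := indep_pair' hef hP'e hQ'f hP'0 hQ'0
  have iPR := indep_pair' heg hPe hRg hP0 hR0
  have iQR := indep_pair' hfg hQf hRg hQ0 hR0
  have iRR' := indep_pair' hab hRa hR'b hR0 hR'0
  -- a and b as spans
  have haS : a = Submodule.span K {P, Q} := eq_span_pair ha hPa hQa iPQ
  have hbS : b = Submodule.span K {P', Q'} := eq_span_pair hb hP'b hQ'b iP'Q'
  -- coordinates of R, R'
  obtain ⟨l, m, hReq⟩ := mem_span_pair.1 (haS ▸ hRa)
  obtain ⟨l', m', hR'eq⟩ := mem_span_pair.1 (hbS ▸ hR'b)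
  have hl : l ≠ 0 := by
    rintro rfl
    have h0 : m • Q + (-1 : K) • R = 0 := by
      rw [zero_smul, zero_add] at hReq
      rw [hReq]; module
    exact one_ne_zero (neg_eq_zero.1 (iQR _ _ h0).2)
  have hm : m ≠ 0 := by
    rintro rfl
    have h0 : l • P + (-1 : K) • R = 0 := by
      rw [zero_smul, add_zero] at hReq
      rw [hReq]; module
    exact one_ne_zero (neg_eq_zero.1 (iPR _ _ h0).2)
  -- c as a span
  have iC : ∀ s t : K, s • (P + P') + t • (Q + Q') = 0 → s = 0 ∧ t = 0 := by
    intro s t hst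
    have h4 := four_term hab hPa hQa hP'b hQ'b iPQ iP'Q'
      (c₁ := s) (c₂ := t) (c₃ := s) (c₄ := t)
      (by linear_combination (norm := module) hst)
    exact ⟨h4.1, h4.2.1⟩
  have hcS : c = Submodule.span K {P + P', Q + Q'} := eq_span_pair hc hPP'c hQQ'c iC
  -- R' = l • P' + m • Q'
  obtain ⟨s₁, t₁, h₇⟩ := mem_span_pair.1 (hcS ▸ hRR'c)
  have h₇' := four_term hab hPa hQa hP'b hQ'b iPQ iP'Q'
    (c₁ := s₁ - l) (c₂ := t₁ - m) (c₃ := s₁ - l') (c₄ := t₁ - m')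
    (by linear_combination (norm := module) h₇ - hReq - hR'eq)
  have hl' : l' = l := by
    have e1 := sub_eq_zero.1 h₇'.1
    have e3 := sub_eq_zero.1 h₇'.2.2.1
    rw [← e1, ← e3]
  have hm' : m' = m := by
    have e2 := sub_eq_zero.1 h₇'.2.1
    have e4 := sub_eq_zero.1 h₇'.2.2.2
    rw [← e2, ← e4]
  rw [hl', hm'] at hR'eq
  -- coordinates of x, y and the point of h on c
  obtain ⟨σ, τ, hxeq⟩ := mem_span_pair.1 (haS ▸ hxa)
  obtain ⟨σ₂, τ₂, hyeq⟩ := mem_span_pair.1 (hbS ▸ hyb)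
  have hστ : σ ≠ 0 ∨ τ ≠ 0 := by
    by_contra hcon
    push_neg at hcon
    obtain ⟨rfl, rfl⟩ := hcon
    apply hx0
    rw [← hxeq]; simp
  obtain ⟨z₄, hz₄, hz₄0⟩ := (Submodule.ne_bot_iff _).1 hhc
  obtain ⟨α, β, hz₄eq⟩ := mem_span_pair.1 (hhS ▸ hz₄.1)
  have hα : α ≠ 0 := by
    rintro rfl
    have hmm : z₄ ∈ b ⊓ c := ⟨by rw [← hz₄eq]; simpa using b.smul_mem β hyb, hz₄.2⟩
    rw [hbc, Submodule.mem_bot] at hmm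
    exact hz₄0 hmm
  have hβ : β ≠ 0 := by
    rintro rfl
    have hmm : z₄ ∈ a ⊓ c := ⟨by rw [← hz₄eq]; simpa using a.smul_mem α hxa, hz₄.2⟩
    rw [hac, Submodule.mem_bot] at hmm
    exact hz₄0 hmm
  obtain ⟨s₂, t₂, h₈⟩ := mem_span_pair.1 (hcS ▸ hz₄.2)
  have h₈' := four_term hab hPa hQa hP'b hQ'b iPQ iP'Q'
    (c₁ := α * σ - s₂) (c₂ := α * τ - t₂) (c₃ := β * σ₂ - s₂) (c₄ := β * τ₂ - t₂)
    (by linear_combination (norm := module) α • hxeq + β • hyeq + hz₄eq - h₈)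
  have hyσ : β * σ₂ = α * σ := by
    have e1 := sub_eq_zero.1 h₈'.1
    have e3 := sub_eq_zero.1 h₈'.2.2.1
    rw [e1, e3]
  have hyτ : β * τ₂ = α * τ := by
    have e2 := sub_eq_zero.1 h₈'.2.1
    have e4 := sub_eq_zero.1 h₈'.2.2.2
    rw [e2, e4]
  have hαY : α • (σ • P' + τ • Q') = β • y := by
    rw [← hyeq]
    match_scalars
    · linear_combination -hyσ
    · linear_combination -hyτ
  have hYh : σ • P' + τ • Q' ∈ h := by
    have hYeq : (α⁻¹ * β) • y = σ • P' + τ • Q' := by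
      rw [mul_smul, ← hαY, smul_smul, inv_mul_cancel₀ hα, one_smul]
    rw [← hYeq]
    exact h.smul_mem _ hyh
  -- coordinates of u, v and the point of d on g
  obtain ⟨α₁, β₁, hueq⟩ := mem_span_pair.1 (heS2 ▸ hue)
  obtain ⟨α₂, β₂, hveq⟩ := mem_span_pair.1 (hfS2 ▸ hvf)
  obtain ⟨w, hw, hw0⟩ := (Submodule.ne_bot_iff _).1 hdg
  obtain ⟨lw, mw, hweqd⟩ := mem_span_pair.1 (hdS ▸ hw.1)
  obtain ⟨γ, δ, hweqg⟩ := mem_span_pair.1 (hgS2 ▸ hw.2)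
  have h₉ := four_term hab hPa hQa hP'b hQ'b iPQ iP'Q'
    (c₁ := lw * α₁ - γ * l) (c₂ := mw * α₂ - γ * m)
    (c₃ := lw * β₁ - δ * l) (c₄ := mw * β₂ - δ * m)
    (by linear_combination (norm := module) lw • hueq + mw • hveq + hweqd - hweqg - γ • hReq - δ • hR'eq)
  have e1 := sub_eq_zero.1 h₉.1
  have e2 := sub_eq_zero.1 h₉.2.1
  have e3 := sub_eq_zero.1 h₉.2.2.1
  have e4 := sub_eq_zero.1 h₉.2.2.2
  have hγδ : γ ≠ 0 ∨ δ ≠ 0 := by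
    by_contra hcon
    push_neg at hcon
    obtain ⟨rfl, rfl⟩ := hcon
    apply hw0
    rw [← hweqg]; simp
  have hlw : lw ≠ 0 := by
    rintro rfl
    rw [zero_mul] at e1 e3
    have hγ0 : γ = 0 := by
      rcases mul_eq_zero.1 e1.symm with h' | h'
      · exact h'
      · exact absurd h' hl
    have hδ0 : δ = 0 := by
      rcases mul_eq_zero.1 e3.symm with h' | h'
      · exact h'
      · exact absurd h' hl
    rcases hγδ with hγ | hδ
    · exact hγ hγ0
    · exact hδ hδ0
  have hmw : mw ≠ 0 := by
    rintro rfl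
    rw [zero_mul] at e2 e4
    have hγ0 : γ = 0 := by
      rcases mul_eq_zero.1 e2.symm with h' | h'
      · exact h'
      · exact absurd h' hm
    have hδ0 : δ = 0 := by
      rcases mul_eq_zero.1 e4.symm with h' | h'
      · exact h'
      · exact absurd h' hm
    rcases hγδ with hγ | hδ
    · exact hγ hγ0
    · exact hδ hδ0
  -- the lines γ•P+δ•P' etc. lie on d
  have hPP'd : γ • P + δ • P' ∈ d := by
    have hl5 : l • (γ • P + δ • P') = lw • u := by
      rw [← hueq]
      match_scalars
      · linear_combination -e1
      · linear_combination -e3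
    have : (l⁻¹ * lw) • u = γ • P + δ • P' := by
      rw [mul_smul, ← hl5, smul_smul, inv_mul_cancel₀ hl, one_smul]
    rw [← this]
    exact d.smul_mem _ hud
  have hQQ'd : γ • Q + δ • Q' ∈ d := by
    have hm5 : m • (γ • Q + δ • Q') = mw • v := by
      rw [← hveq]
      match_scalars
      · linear_combination -e2
      · linear_combination -e4
    have : (m⁻¹ * mw) • v = γ • Q + δ • Q' := by
      rw [mul_smul, ← hm5, smul_smul, inv_mul_cancel₀ hm, one_smul]
    rw [← this]
    exact d.smul_mem _ hvd
  -- the witness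
  obtain ⟨z, hzdef⟩ : ∃ w', w' = σ • (γ • P + δ • P') + τ • (γ • Q + δ • Q') := ⟨_, rfl⟩
  have hzd : z ∈ d := by
    rw [hzdef]; exact add_mem (d.smul_mem _ hPP'd) (d.smul_mem _ hQQ'd)
  have hzh : z ∈ h := by
    have hz2 : z = γ • x + δ • (σ • P' + τ • Q') := by
      rw [hzdef, ← hxeq]; module
    rw [hz2]
    exact add_mem (h.smul_mem _ hxh) (h.smul_mem _ hYh)
  have hz0 : z ≠ 0 := by
    intro hz
    have h10 := four_term hab hPa hQa hP'b hQ'b iPQ iP'Q'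
      (c₁ := σ * γ) (c₂ := τ * γ) (c₃ := σ * δ) (c₄ := τ * δ)
      (by rw [hzdef] at hz; linear_combination (norm := module) hz)
    rcases hστ with hσ | hτ <;> rcases hγδ with hγ | hδ
    · exact mul_ne_zero hσ hγ h10.1
    · exact mul_ne_zero hσ hδ h10.2.2.1
    · exact mul_ne_zero hτ hγ h10.2.1
    · exact mul_ne_zero hτ hδ h10.2.2.2
  exact (Submodule.ne_bot_iff _).2 ⟨z, ⟨hzh, hzd⟩, hz0⟩
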